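/- Let I be an ideal on ℕ which is not countably generated. Equip X = I with the topology generated by taking as a basis of closed sets ∅ together with the sets X_A = {J ∈ I : J ⊆ A} for A ∈ I. Then: (1) every X_A is nowhere dense in X; (2) X is of second category in itself; (3) ⋃_{A ∈ I} X_A = X. Hence I is not a Baire ideal for X. -/

import Mathlib

open scoped ENNReal Cardinal
open scoped Topology

/-- An ideal on ℕ containing all finite sets, closed under subsets and finite
unions, with `ℕ ∉ I`. -/
def IsIdealOn (I : Set (Set ℕ)) : Prop :=
  Set.univ ∉ I ∧ (∀ A ∈ I, ∀ B, B ⊆ A → B ∈ I) ∧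
    (∀ A ∈ I, ∀ B ∈ I, A ∪ B ∈ I) ∧ (∀ A : Set ℕ, A.Finite → A ∈ I)

/-- `β` is a basis of the ideal `I`: a cofinal (under inclusion) subfamily. -/
def IsIdealBasis (I β : Set (Set ℕ)) : Prop := β ⊆ I ∧ ∀ A ∈ I, ∃ B ∈ β, A ⊆ B

/-- `I` is a Baire ideal for the topological space `X`: for every monotone family of
nowhere dense subsets of `X` indexed by `I`, the union is not all of `X`. -/
def IsBaireIdealFor (I : Set (Set ℕ)) (X : Type*) [TopologicalSpace X] : Prop :=
  ∀ f : Set ℕ → Set X, (∀ A ∈ I, IsNowhereDense (f A)) →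
    (∀ A ∈ I, ∀ B ∈ I, A ⊆ B → f A ⊆ f B) → (⋃ A ∈ I, f A) ≠ Set.univ

/-- For a not countably generated ideal `I`, the space `X = I` with the topology whose
basic closed sets are the `X_A = {J ∈ I : J ⊆ A}` satisfies: every `X_A` is nowhere
dense, `X` is of second category in itself, the `X_A` cover `X`, and hence `I` is not a
Baire ideal for `X`. -/
theorem stmt_4 (I : Set (Set ℕ)) (hI : IsIdealOn I)
    (hnc : ¬ ∃ β : Set (Set ℕ), IsIdealBasis I β ∧ β.Countable)
    (XA : Set ℕ → Set {J : Set ℕ // J ∈ I})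
    (hXA : ∀ A : Set ℕ, XA A = {J : {J : Set ℕ // J ∈ I} | (J : Set ℕ) ⊆ A})
    (t : TopologicalSpace {J : Set ℕ // J ∈ I})
    (ht : t = TopologicalSpace.generateFrom {U | ∃ A ∈ I, U = (XA A)ᶜ}) :
    (∀ A ∈ I, @IsNowhereDense _ t (XA A)) ∧
      ¬ @IsMeagre _ t (Set.univ : Set {J : Set ℕ // J ∈ I}) ∧
      (⋃ A ∈ I, XA A) = Set.univ ∧
      ¬ @IsBaireIdealFor I {J : Set ℕ // J ∈ I} t := by
  subst ht
  obtain ⟨huniv, hsub, hun, hfin⟩ := hI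
  have hmemXA : ∀ (A : Set ℕ) (K : {J : Set ℕ // J ∈ I}),
      K ∈ XA A ↔ (K : Set ℕ) ⊆ A := by
    intro A K; rw [hXA]; rfl
  have hempty : (∅ : Set ℕ) ∈ I := hfin ∅ Set.finite_empty
  -- every `A ∈ I` misses some point
  have hmiss : ∀ A ∈ I, ∃ n, n ∉ A := by
    intro A hA
    by_contra h
    push_neg at h
    exact huniv (by rwa [Set.eq_univ_of_forall h] at hA)
  -- key lemma: every nonempty open set contains a set `(XA B)ᶜ` with `B ∈ I`
  have key : ∀ U : Set {J : Set ℕ // J ∈ I},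
      TopologicalSpace.GenerateOpen {U | ∃ A ∈ I, U = (XA A)ᶜ} U →
      ∀ J ∈ U, ∃ B ∈ I, (XA B)ᶜ ⊆ U := by
    intro U hU
    induction hU with
    | basic U hU =>
      obtain ⟨A, hA, rfl⟩ := hU
      exact fun J _ => ⟨A, hA, subset_rfl⟩
    | univ => exact fun J _ => ⟨∅, hempty, fun K _ => trivial⟩
    | inter U V hU hV ihU ihV =>
      intro J hJ
      obtain ⟨B₁, hB₁, h₁⟩ := ihU J hJ.1
      obtain ⟨B₂, hB₂, h₂⟩ := ihV J hJ.2
      refine ⟨B₁ ∪ B₂, hun _ hB₁ _ hB₂, fun K hK => ⟨h₁ ?_, h₂ ?_⟩⟩ <;>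
      · intro hc
        rw [hmemXA] at hc
        exact hK ((hmemXA _ _).mpr (hc.trans (by simp)))
    | sUnion S hS ih =>
      intro J hJ
      obtain ⟨V, hV, hJV⟩ := hJ
      obtain ⟨B, hB, h⟩ := ih V hV J hJV
      exact ⟨B, hB, h.trans (Set.subset_sUnion_of_mem hV)⟩
  set t := TopologicalSpace.generateFrom {U | ∃ A ∈ I, U = (XA A)ᶜ} with htdef
  have keyOpen : ∀ U : Set {J : Set ℕ // J ∈ I}, IsOpen[t] U →
      ∀ J ∈ U, ∃ B ∈ I, (XA B)ᶜ ⊆ U := fun U hU => key U hU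
  have hclosed : ∀ A ∈ I, IsClosed[t] (XA A) := by
    intro A hA
    exact ⟨TopologicalSpace.GenerateOpen.basic _ ⟨A, hA, rfl⟩⟩
  -- (1) each XA A is nowhere dense
  have h1 : ∀ A ∈ I, @IsNowhereDense _ t (XA A) := by
    intro A hA
    rw [IsNowhereDense, (hclosed A hA).closure_eq]
    by_contra h
    obtain ⟨J, hJ⟩ := Set.nonempty_iff_ne_empty.mpr h
    obtain ⟨B, hB, hBsub⟩ := keyOpen _ (@isOpen_interior _ t (XA A)) J hJ
    obtain ⟨n, hn⟩ := hmiss (A ∪ B) (hun _ hA _ hB)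
    have hnA : n ∉ A := fun h => hn (Set.mem_union_left _ h)
    have hnB : n ∉ B := fun h => hn (Set.mem_union_right _ h)
    have hsingle : ({n} : Set ℕ) ∈ I := hfin _ (Set.finite_singleton n)
    have hmem : (⟨{n}, hsingle⟩ : {J : Set ℕ // J ∈ I}) ∈ (XA B)ᶜ := by
      intro hc
      exact hnB ((hmemXA B _).mp hc rfl)
    have := @interior_subset _ t (XA A) ⟨{n}, hsingle⟩ (hBsub hmem)
    exact hnA ((hmemXA A _).mp this rfl)
  -- (3) the XA A cover X
  have h3 : (⋃ A ∈ I, XA A) = Set.univ := by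
    ext J
    simp only [Set.mem_iUnion, Set.mem_univ, iff_true]
    exact ⟨J.1, J.2, (hmemXA _ _).mpr subset_rfl⟩
  -- (2) X is not meagre in itself
  have h2 : ¬ @IsMeagre _ t (Set.univ : Set {J : Set ℕ // J ∈ I}) := by
    intro hm
    rw [@isMeagre_iff_countable_union_isNowhereDense _ t] at hm
    obtain ⟨S, hSnwd, hScnt, hScov⟩ := hm
    have hchoice : ∀ s ∈ S, ∃ B ∈ I, s ⊆ XA B := by
      intro s hs
      have hcl : IsClosed[t] (closure[t] s) := isClosed_closure
      have hne : ((closure[t] s)ᶜ : Set {J : Set ℕ // J ∈ I}).Nonempty := by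
        rw [Set.nonempty_compl]
        intro h
        have := hSnwd s hs
        rw [IsNowhereDense, h, interior_univ] at this
        exact absurd this (by
          intro hc
          have : (⟨∅, hempty⟩ : {J : Set ℕ // J ∈ I}) ∈ (Set.univ : Set _) := trivial
          rw [hc] at this
          exact this)
      obtain ⟨J, hJ⟩ := hne
      obtain ⟨B, hB, hBsub⟩ := keyOpen _ (hcl.isOpen_compl) J hJ
      refine ⟨B, hB, ?_⟩
      have : closure[t] s ⊆ XA B := by
        rw [← Set.compl_subset_compl]
        exact hBsub
      exact (subset_closure).trans this
    choose B hBI hBsub using hchoice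
    apply hnc
    refine ⟨{b | ∃ s : S, B s.1 s.2 = b}, ⟨?_, ?_⟩, ?_⟩
    · rintro b ⟨s, rfl⟩; exact hBI s.1 s.2
    · intro A hA
      have : (⟨A, hA⟩ : {J : Set ℕ // J ∈ I}) ∈ ⋃₀ S := hScov trivial
      obtain ⟨s, hs, hmem⟩ := this
      exact ⟨B s hs, ⟨⟨s, hs⟩, rfl⟩, (hmemXA _ _).mp (hBsub s hs hmem)⟩
    · have : Countable S := hScnt.to_subtype
      exact Set.countable_range (fun s : S => B s.1 s.2) |>.mono
        (by rintro b ⟨s, rfl⟩; exact ⟨s, rfl⟩)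
  refine ⟨h1, h2, h3, fun hBaire => hBaire XA h1 ?_ h3⟩
  intro A hA B hB hAB J hJ
  rw [hmemXA] at hJ ⊢
  exact hJ.trans hAB
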